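/- arXiv:0812.0104 — 2 statements merged into one kernel-verified Lean document; each statement's English description precedes it below -/
import Mathlib

section
/- For y₀ ∈ (0,1), θ > 0, and 0 ≤ v ≤ θ, for all t ≥ 0 one has L(t;y₀,θ) - L(t;y₀,θ-v) ≤ (1 - e^{-vt}) · L(t;y₀,θ), where L(t;y₀,θ) = [1+(1/y₀-1)e^{-θt}]^{-1}. -/
/-- For `y₀ ∈ (0,1)`, `θ > 0`, `0 ≤ v ≤ θ` and `t ≥ 0`:
`L(t;y₀,θ) - L(t;y₀,θ-v) ≤ (1 - e^{-v t}) L(t;y₀,θ)`,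
where `L(t;y₀,θ) = (1 + (1/y₀ - 1) e^{-θ t})⁻¹`. -/
theorem logistic_rate_comparison (y₀ θ v t : ℝ) (hy : y₀ ∈ Set.Ioo (0:ℝ) 1) (hθ : 0 < θ)
    (hv0 : 0 ≤ v) (hvθ : v ≤ θ) (ht : 0 ≤ t)
    (L : ℝ → ℝ → ℝ)
    (hL : ∀ ϑ s, L ϑ s = (1 + (1/y₀ - 1) * Real.exp (-ϑ * s))⁻¹) :
    L θ t - L (θ - v) t ≤ (1 - Real.exp (-v * t)) * L θ t := by
  obtain ⟨hy0, hy1⟩ := hy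
  have ha : 0 < 1/y₀ - 1 := by
    have : 1 < 1/y₀ := one_lt_one_div hy0 hy1
    linarith
  set A : ℝ := (1/y₀ - 1) * Real.exp (-θ * t) with hA
  have hApos : 0 < A := mul_pos ha (Real.exp_pos _)
  set e : ℝ := Real.exp (-v * t) with he
  have hepos : 0 < e := Real.exp_pos _
  have hele : e ≤ 1 := by
    apply Real.exp_le_one_iff.2
    nlinarith
  have hexp : Real.exp (-(θ - v) * t) = Real.exp (-θ * t) / e := by
    rw [he, ← Real.exp_sub]
    ring_nf
  rw [hL, hL, hexp]
  have hAe : 1 + (1/y₀ - 1) * (Real.exp (-θ * t) / e) = (e + A) / e := by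
    field_simp [hA]
    rw [hA, mul_add, ← mul_assoc, mul_sub, mul_one_div_cancel hy0.ne']
    ring
  rw [hAe]
  have h1 : ((e + A) / e)⁻¹ = e / (e + A) := by
    rw [inv_div]
  rw [h1]
  have h1A : 0 < 1 + A := by linarith
  have heA : 0 < e + A := by linarith
  have key : e / (1 + A) ≤ e / (e + A) := by
    apply div_le_div_of_nonneg_left (le_of_lt hepos) heA
    linarith
  have h2 : (1 + A)⁻¹ - e / (e + A) ≤ (1 - e) * (1 + A)⁻¹ := by
    have : e * (1 + A)⁻¹ ≤ e / (e + A) := by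
      rw [div_eq_mul_inv, inv_eq_one_div, inv_eq_one_div]
      calc e * (1 / (1 + A)) = e / (1 + A) := by ring
        _ ≤ e / (e + A) := key
        _ = e * (1 / (e + A)) := by ring
    linarith
  exact h2
end

section
/- For y₀ ∈ (0,1), θ > 0, and v ≥ 0 with θ - v > 0, for all t ≥ 0 one has L(t;y₀,θ-v) ≥ e^{-vt} · L(t;y₀,θ). -/
/-- For `y₀ ∈ (0,1)`, `0 ≤ v < θ` and `t ≥ 0`:
`L(t;y₀,θ-v) ≥ e^{-v t} L(t;y₀,θ)` where `L(t;y₀,θ) = (1 + (1/y₀ - 1) e^{-θ t})⁻¹`. -/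
theorem logistic_lower_bound_rate_shift (y₀ θ v t : ℝ) (hy : y₀ ∈ Set.Ioo (0:ℝ) 1)
    (hθ : 0 < θ) (hv0 : 0 ≤ v) (hvθ : v < θ) (ht : 0 ≤ t)
    (L : ℝ → ℝ → ℝ)
    (hL : ∀ ϑ s, L ϑ s = (1 + (1/y₀ - 1) * Real.exp (-ϑ * s))⁻¹) :
    Real.exp (-v * t) * L θ t ≤ L (θ - v) t := by
  obtain ⟨hy0, hy1⟩ := hy
  rw [hL, hL]
  set c : ℝ := 1 / y₀ - 1 with hcdef
  have hc : 0 < c := by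
    have h1 : 1 < 1 / y₀ := (one_lt_one_div hy0 hy1)
    simp only [hcdef]; linarith
  set A : ℝ := Real.exp (-θ * t) with hA
  set B : ℝ := Real.exp (-(θ - v) * t) with hB
  set E : ℝ := Real.exp (-v * t) with hE
  have hApos : 0 < A := Real.exp_pos _
  have hBpos : 0 < B := Real.exp_pos _
  have hEpos : 0 < E := Real.exp_pos _
  have hE1 : E ≤ 1 := Real.exp_le_one_iff.mpr (by nlinarith)
  have hBE : B * E = A := by
    rw [hA, hB, hE, ← Real.exp_add]; ring_nf
  have h1 : 0 < 1 + c * A := by positivity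
  have h2 : 0 < 1 + c * B := by positivity
  rw [← one_div, ← one_div, mul_one_div, div_le_div_iff₀ h1 h2]
  nlinarith
end
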